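/- In any connected graph G there exist two distinct vertices x and y with distance d(x,y) ≤ 2 such that deg(x) + deg(y) ≤ 2·(average degree of G). -/

import Mathlib

open SimpleGraph

variable {V : Type*}

/-- `S` is a dominating set of `G`: every vertex is in `S` or has a neighbor in `S`. -/
def SimpleGraph.IsDomSet (G : SimpleGraph V) (S : Finset V) : Prop :=
  ∀ v : V, v ∈ S ∨ ∃ u ∈ S, G.Adj u v

/-- The domination number of a finite graph. -/
noncomputable def SimpleGraph.domNum [Fintype V] (G : SimpleGraph V) : ℕ :=
  sInf {n | ∃ S : Finset V, S.card = n ∧ G.IsDomSet S}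

/-- The bondage number: the minimum size of a set of edges of `G` whose removal
increases the domination number. -/
noncomputable def SimpleGraph.bondageNum [Fintype V] (G : SimpleGraph V) : ℕ :=
  sInf {n | ∃ B : Finset (Sym2 V), B.card = n ∧ ↑B ⊆ G.edgeSet ∧
    G.domNum < (G.deleteEdges ↑B).domNum}

theorem exists_close_pair_degree_le_twice_avg [Fintype V]
    (G : SimpleGraph V) [DecidableRel G.Adj]
    (hG : G.Connected) (h2 : 2 ≤ Fintype.card V) :
    ∃ x y : V, x ≠ y ∧ G.dist x y ≤ 2 ∧
      (G.degree x + G.degree y) * Fintype.card V ≤ 4 * G.edgeFinset.card := by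
  classical
  by_contra hcon
  push_neg at hcon
  -- notation
  set n : ℤ := (Fintype.card V : ℤ) with hn
  set S : ℤ := ((∑ v, G.degree v : ℕ) : ℤ) with hSdef
  have hS4 : (4 : ℤ) * G.edgeFinset.card = 2 * S := by
    rw [hSdef, G.sum_degrees_eq_twice_card_edges]; push_cast; ring
  -- the contradiction hypothesis in ℤ form
  have hyp : ∀ x y : V, x ≠ y → G.dist x y ≤ 2 →
      2 * S < (G.degree x + G.degree y) * n := by
    intro x y hxy hd
    have := hcon x y hxy hd
    have : (4 * G.edgeFinset.card : ℤ) < (G.degree x + G.degree y) * Fintype.card V := by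
      exact_mod_cast this
    rw [hS4] at this
    exact_mod_cast this
  -- every vertex has a neighbor
  have hdegpos : ∀ v : V, 1 ≤ (G.degree v : ℤ) := by
    intro v
    have : 0 < G.degree v := by
      rw [G.degree_pos_iff_exists_adj]
      obtain ⟨w, hw⟩ := Fintype.exists_ne_of_one_lt_card h2 v
      obtain ⟨p⟩ := hG.preconnected v w
      cases p with
      | nil => exact absurd rfl hw
      | cons h q => exact ⟨_, h⟩
    exact_mod_cast this
  -- distance facts
  have hdistadj : ∀ {x y : V}, G.Adj x y → G.dist x y ≤ 2 := by
    intro x y h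
    calc G.dist x y ≤ (Walk.cons h Walk.nil).length := SimpleGraph.dist_le _
    _ ≤ 2 := by simp
  have hdist2 : ∀ {x y z : V}, G.Adj x z → G.Adj z y → G.dist x y ≤ 2 := by
    intro x y z h1 h2'
    calc G.dist x y ≤ (Walk.cons h1 (Walk.cons h2' Walk.nil)).length :=
        SimpleGraph.dist_le _
    _ ≤ 2 := by simp
  -- the set of below-average vertices
  set A : Finset V := Finset.univ.filter (fun v => n * (G.degree v : ℤ) ≤ S) with hA
  have hAmem : ∀ v, v ∈ A ↔ n * (G.degree v : ℤ) ≤ S := by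
    intro v; simp [hA]
  -- A is nonempty
  have hAne : A.Nonempty := by
    obtain ⟨v, -, hv⟩ := Finset.exists_min_image Finset.univ (fun v => G.degree v)
      (Finset.univ_nonempty_iff.2 (Fintype.card_pos_iff.1 (by omega)))
    refine ⟨v, (hAmem v).2 ?_⟩
    have : (Fintype.card V) * G.degree v ≤ ∑ u, G.degree u := by
      calc Fintype.card V * G.degree v = ∑ _u : V, G.degree v := by
            rw [Finset.sum_const, Finset.card_univ, smul_eq_mul]
      _ ≤ ∑ u, G.degree u := Finset.sum_le_sum (fun u hu => hv u hu)
    rw [hn, hSdef]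
    push_cast
    exact_mod_cast this
  -- distinct members of A are far apart
  have hfar : ∀ x ∈ A, ∀ y ∈ A, x ≠ y → ¬ G.dist x y ≤ 2 := by
    intro x hx y hy hxy hd
    have h1 := (hAmem x).1 hx
    have h2' := (hAmem y).1 hy
    have := hyp x y hxy hd
    have hexp : ((G.degree x : ℤ) + G.degree y) * n = n * G.degree x + n * G.degree y := by
      ring
    push_cast at this
    omega
  -- neighborhoods of members of A are disjoint from A
  have hNA : ∀ v ∈ A, Disjoint (G.neighborFinset v) A := by
    intro v hv
    rw [Finset.disjoint_left]
    intro u hu huA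
    rw [mem_neighborFinset] at hu
    exact hfar v hv u huA (fun h => G.irrefl (h ▸ hu)) (hdistadj hu)
  -- neighborhoods of distinct members of A are disjoint
  have hNN : ∀ v ∈ A, ∀ w ∈ A, v ≠ w → Disjoint (G.neighborFinset v) (G.neighborFinset w) := by
    intro v hv w hw hvw
    rw [Finset.disjoint_left]
    intro u hu hu'
    rw [mem_neighborFinset] at hu hu'
    exact hfar v hv w hw hvw (hdist2 hu hu'.symm)
  set B : Finset V := A.biUnion (fun v => G.neighborFinset v) with hB
  have hAB : Disjoint A B := by
    rw [Finset.disjoint_right, hB]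
    intro u hu huA
    rw [Finset.mem_biUnion] at hu
    obtain ⟨v, hv, huv⟩ := hu
    exact (Finset.disjoint_left.1 (hNA v hv)) huv huA
  set C : Finset V := Finset.univ \ (A ∪ B) with hC
  -- cardinalities
  have hBcard : (B.card : ℤ) = ∑ v ∈ A, (G.degree v : ℤ) := by
    rw [hB, Finset.card_biUnion (fun v hv w hw hvw => hNN v hv w hw hvw)]
    push_cast
    exact Finset.sum_congr rfl (fun v _ => by
      rw [G.card_neighborFinset_eq_degree])
  have hCcard : (C.card : ℤ) = n - A.card - B.card := by
    have hle : (A ∪ B).card ≤ Finset.univ.card :=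
      Finset.card_le_card (Finset.subset_univ _)
    rw [hC, Finset.card_sdiff_of_subset (Finset.subset_univ _), Nat.cast_sub hle,
      Finset.card_union_of_disjoint hAB, Finset.card_univ, hn]
    push_cast
    ring
  -- sum decomposition
  have hsplit : n * S = ∑ v ∈ A, n * (G.degree v : ℤ)
      + ∑ v ∈ A, ∑ u ∈ G.neighborFinset v, n * (G.degree u : ℤ)
      + ∑ u ∈ C, n * (G.degree u : ℤ) := by
    have h1 : n * S = ∑ v : V, n * (G.degree v : ℤ) := by
      rw [← Finset.mul_sum, hSdef]; push_cast; ring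
    have h2' : ∑ v ∈ A ∪ B, n * (G.degree v : ℤ) + ∑ u ∈ C, n * (G.degree u : ℤ)
        = ∑ v : V, n * (G.degree v : ℤ) := by
      rw [hC, add_comm]
      exact Finset.sum_sdiff (Finset.subset_univ _)
    rw [Finset.sum_union hAB, hB,
      Finset.sum_biUnion (fun v hv w hw hvw => hNN v hv w hw hvw)] at h2'
    omega
  -- lower bound for each neighborhood sum
  have hNbd : ∀ v ∈ A, (G.degree v : ℤ) * (2 * S - n * G.degree v) + G.degree v
      ≤ ∑ u ∈ G.neighborFinset v, n * (G.degree u : ℤ) := by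
    intro v hv
    have key : ∀ u ∈ G.neighborFinset v,
        2 * S - n * (G.degree v : ℤ) + 1 ≤ n * (G.degree u : ℤ) := by
      intro u hu
      rw [mem_neighborFinset] at hu
      have hne : v ≠ u := fun h => G.irrefl (h ▸ hu)
      have := hyp v u hne (hdistadj hu)
      have hexp : ((G.degree v : ℤ) + G.degree u) * n = n * G.degree v + n * G.degree u := by
        ring
      omega
    calc (G.degree v : ℤ) * (2 * S - n * G.degree v) + G.degree v
        = ∑ _u ∈ G.neighborFinset v, (2 * S - n * (G.degree v : ℤ) + 1) := by
          rw [Finset.sum_const, G.card_neighborFinset_eq_degree]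
          ring
      _ ≤ _ := Finset.sum_le_sum key
  -- lower bound for `C`
  have hCbd : (C.card : ℤ) * S ≤ ∑ u ∈ C, n * (G.degree u : ℤ) := by
    have key : ∀ u ∈ C, S ≤ n * (G.degree u : ℤ) := by
      intro u hu
      rw [hC, Finset.mem_sdiff, Finset.mem_union] at hu
      have : u ∉ A := fun h => hu.2 (Or.inl h)
      rw [hAmem] at this
      omega
    calc (C.card : ℤ) * S = ∑ _u ∈ C, S := by rw [Finset.sum_const]; ring
      _ ≤ _ := Finset.sum_le_sum key
  -- per-vertex key inequality
  have hkey : ∀ v ∈ A, S * (G.degree v : ℤ) + S + 1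
      ≤ n * (G.degree v : ℤ) + ((G.degree v : ℤ) * (2 * S - n * G.degree v) + G.degree v) := by
    intro v hv
    have h1 := (hAmem v).1 hv
    have hd := hdegpos v
    nlinarith [mul_nonneg (sub_nonneg.2 hd) (sub_nonneg.2 h1)]
  -- put it all together
  have hfinal : n * S + A.card ≤ n * S := by
    have hstep1 : ∑ v ∈ A, (S * (G.degree v : ℤ) + S + 1)
        ≤ ∑ v ∈ A, n * (G.degree v : ℤ)
          + ∑ v ∈ A, ∑ u ∈ G.neighborFinset v, n * (G.degree u : ℤ) := by
      rw [← Finset.sum_add_distrib]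
      refine Finset.sum_le_sum (fun v hv => ?_)
      exact le_trans (hkey v hv) (add_le_add_right (hNbd v hv) _)
    have hsum1 : ∑ v ∈ A, (S * (G.degree v : ℤ) + S + 1)
        = S * (∑ v ∈ A, (G.degree v : ℤ)) + A.card * (S + 1) := by
      rw [Finset.sum_add_distrib, Finset.sum_add_distrib, ← Finset.mul_sum,
        Finset.sum_const, Finset.sum_const]
      ring
    have hge : S * (∑ v ∈ A, (G.degree v : ℤ)) + A.card * (S + 1) + (C.card : ℤ) * S
        ≤ n * S := by
      rw [hsplit]
      have := le_trans (le_of_eq hsum1.symm) hstep1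
      omega
    rw [hCcard, hBcard] at hge
    nlinarith [hge]
  have hApos : 1 ≤ (A.card : ℤ) := by
    exact_mod_cast Finset.Nonempty.card_pos hAne
  omega
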